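/- arXiv:2311.03871 — 3 statements merged into one kernel-verified Lean document; each statement's English description precedes it below -/
import Mathlib

section
/- Let X be a quandle and Y a hierarchical quandle over X. Then the operation (x1, y1) ∘ (x2, y2) = (x1 * x2, y1 *_{x1}^{x2} y2) makes X × Y a quandle. -/
/-- A hierarchical quandle over a quandle `(X, qop)`:
`op x1 x2 y1 y2` denotes `y1 *_{x1}^{x2} y2`. -/
structure HierarchicalQuandle {X : Type*} (qop : X → X → X) (Y : Type*) where
  op : X → X → Y → Y → Y
  idem : ∀ x y, op x x y y = y
  rightBij : ∀ x1 x2 a, Function.Bijective fun y => op x1 x2 y a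
  distrib : ∀ x1 x2 x3 y1 y2 y3,
    op (qop x1 x2) x3 (op x1 x2 y1 y2) y3 =
      op (qop x1 x3) (qop x2 x3) (op x1 x3 y1 y3) (op x2 x3 y2 y3)

/-- `(x1, y1) ∘ (x2, y2) = (x1 * x2, y1 *_{x1}^{x2} y2)` makes
`X × Y` a quandle. -/
theorem prod_quandle {X Y : Type*} (qop : X → X → X)
    (qidem : ∀ x, qop x x = x)
    (qbij : ∀ a b : X, ∃! x, qop x a = b)
    (qdistrib : ∀ x1 x2 x3, qop (qop x1 x2) x3 = qop (qop x1 x3) (qop x2 x3))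
    (H : HierarchicalQuandle qop Y) :
    let circ : X × Y → X × Y → X × Y :=
      fun p q => (qop p.1 q.1, H.op p.1 q.1 p.2 q.2)
    (∀ p : X × Y, circ p p = p) ∧
    (∀ a b : X × Y, ∃! p, circ p a = b) ∧
    (∀ p q r : X × Y, circ (circ p q) r = circ (circ p r) (circ q r)) := by
  intro circ
  refine ⟨fun p => ?_, fun a b => ?_, fun p q r => ?_⟩
  · simp [circ, qidem, H.idem]
  · obtain ⟨x, hx, hxu⟩ := qbij a.1 b.1
    obtain ⟨y, hy⟩ := (H.rightBij x a.1 a.2).2 b.2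
    have yinj := (H.rightBij x a.1 a.2).1
    refine ⟨(x, y), ?_, ?_⟩
    · simp only [circ]
      exact Prod.ext hx (by simpa using hy)
    · rintro ⟨x', y'⟩ h
      have h1 : qop x' a.1 = b.1 := congrArg Prod.fst h
      have hx' : x' = x := hxu x' h1
      have h2 : H.op x' a.1 y' a.2 = b.2 := congrArg Prod.snd h
      rw [hx'] at h2
      have : y' = y := yinj (by simpa using h2.trans hy.symm)
      simp [this, hx']
  · simp only [circ]
    exact Prod.ext (qdistrib p.1 q.1 r.1) (H.distrib p.1 q.1 r.1 p.2 q.2 r.2)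
end

section
/- Let X be a quandle and Y a hierarchical quandle over X, and let K be a commutative ring. Let V_n be the free K-module on tuples ((y1,...,yn),(x1,...,xn)) ∈ Y^n × X^n. Define λ_{n,i} on basis elements by sending ((y1,...,yn),(x1,...,xn)) to ((y1 *_{x1}^{xi} yi, ..., y_{i-1} *_{x_{i-1}}^{xi} yi, y_{i+1}, ..., yn),(x1*xi, ..., x_{i-1}*xi, x_{i+1}, ..., xn)), and l_n = Σ_{i=1}^n (-1)^{i+1} λ_{n,i}. Then l_{n-1} ∘ l_n = 0 for all n ≥ 1. -/
namespace Stmt5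

variable {X Y : Type*} (K : Type*) [CommRing K]

/-- The free `K`-module `V_n` on tuples in `Y^n × X^n`. -/
abbrev V (K : Type*) [CommRing K] (X Y : Type*) (n : ℕ) : Type _ :=
  ((Fin n → Y) × (Fin n → X)) →₀ K

/-- `λ_{n,i}` on generators: act on the entries before `i` by the `i`-th entry
and delete the `i`-th entry. -/
def lamTup (qop : X → X → X) (hop : X → X → Y → Y → Y) {n : ℕ} (i : Fin (n + 1))
    (t : (Fin (n + 1) → Y) × (Fin (n + 1) → X)) : (Fin n → Y) × (Fin n → X) :=
  (fun j => if (j : ℕ) < (i : ℕ)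
      then hop (t.2 j.castSucc) (t.2 i) (t.1 j.castSucc) (t.1 i)
      else t.1 j.succ,
   fun j => if (j : ℕ) < (i : ℕ) then qop (t.2 j.castSucc) (t.2 i) else t.2 j.succ)

/-- The linear map `λ_{n,i} : V_{n+1} → V_n`. -/
noncomputable def lamMap (qop : X → X → X) (hop : X → X → Y → Y → Y) (n : ℕ)
    (i : Fin (n + 1)) : V K X Y (n + 1) →ₗ[K] V K X Y n :=
  Finsupp.lmapDomain K K (lamTup qop hop i)

/-- `l_n = Σ_i (-1)^{i+1} λ_{n,i}` (written with `0`-based indices). -/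
noncomputable def lMap (qop : X → X → X) (hop : X → X → Y → Y → Y) (n : ℕ) :
    V K X Y (n + 1) →ₗ[K] V K X Y n :=
  ∑ i : Fin (n + 1), ((-1 : K) ^ (i : ℕ)) • lamMap K qop hop n i

set_option linter.unreachableTactic false in
set_option linter.unusedTactic false in
theorem lamTup_comm (qop : X → X → X) (hop : X → X → Y → Y → Y)
    (qdistrib : ∀ x1 x2 x3, qop (qop x1 x2) x3 = qop (qop x1 x3) (qop x2 x3))
    (hdistrib : ∀ x1 x2 x3 (y1 y2 y3 : Y),
      hop (qop x1 x2) x3 (hop x1 x2 y1 y2) y3 =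
        hop (qop x1 x3) (qop x2 x3) (hop x1 x3 y1 y3) (hop x2 x3 y2 y3))
    {n : ℕ} (i j : Fin (n + 1)) (hij : (i : ℕ) ≤ (j : ℕ)) :
    lamTup qop hop i ∘ lamTup qop hop j.succ =
      lamTup qop hop j ∘ lamTup qop hop i.castSucc := by
  funext t
  refine Prod.ext (funext fun m => ?_) (funext fun m => ?_) <;>
  · simp only [lamTup, Function.comp_apply, Fin.coe_castSucc, Fin.val_succ]
    split_ifs <;>
      first
        | omega
        | rfl
        | (exact (hdistrib _ _ _ _ _ _).symm)
        | (exact (qdistrib _ _ _).symm)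
        | (simp only [Fin.succ_castSucc])

theorem lamMap_comm (qop : X → X → X) (hop : X → X → Y → Y → Y)
    (qdistrib : ∀ x1 x2 x3, qop (qop x1 x2) x3 = qop (qop x1 x3) (qop x2 x3))
    (hdistrib : ∀ x1 x2 x3 (y1 y2 y3 : Y),
      hop (qop x1 x2) x3 (hop x1 x2 y1 y2) y3 =
        hop (qop x1 x3) (qop x2 x3) (hop x1 x3 y1 y3) (hop x2 x3 y2 y3))
    {n : ℕ} (i j : Fin (n + 1)) (hij : (i : ℕ) ≤ (j : ℕ)) :
    (lamMap K qop hop n i).comp (lamMap K qop hop (n + 1) j.succ) =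
      (lamMap K qop hop n j).comp (lamMap K qop hop (n + 1) i.castSucc) := by
  simp only [lamMap, ← Finsupp.lmapDomain_comp,
    lamTup_comm qop hop qdistrib hdistrib i j hij]

lemma sum_comp' {M N P : Type*} [AddCommMonoid M] [AddCommMonoid N] [AddCommMonoid P]
    [Module K M] [Module K N] [Module K P] {ι κ : Type*} (s : Finset ι) (t : Finset κ)
    (f : ι → (M →ₗ[K] N)) (g : κ → (P →ₗ[K] M)) :
    (∑ i ∈ s, f i).comp (∑ j ∈ t, g j) = ∑ i ∈ s, ∑ j ∈ t, (f i).comp (g j) := by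
  ext x
  simp [LinearMap.sum_apply, map_sum]

lemma pair_cancel (qop : X → X → X) (hop : X → X → Y → Y → Y)
    (qdistrib : ∀ x1 x2 x3, qop (qop x1 x2) x3 = qop (qop x1 x3) (qop x2 x3))
    (hdistrib : ∀ x1 x2 x3 (y1 y2 y3 : Y),
      hop (qop x1 x2) x3 (hop x1 x2 y1 y2) y3 =
        hop (qop x1 x3) (qop x2 x3) (hop x1 x3 y1 y3) (hop x2 x3 y2 y3))
    {n : ℕ} (i j : Fin (n + 1)) (hij : (i : ℕ) ≤ (j : ℕ)) :
    ((-1 : K) ^ ((i : ℕ) + ((j : ℕ) + 1))) •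
        ((lamMap K qop hop n i).comp (lamMap K qop hop (n + 1) j.succ)) +
      ((-1 : K) ^ ((j : ℕ) + (i : ℕ))) •
        ((lamMap K qop hop n j).comp (lamMap K qop hop (n + 1) i.castSucc)) = 0 := by
  rw [lamMap_comm K qop hop qdistrib hdistrib i j hij, ← add_smul]
  have hsign : ((-1 : K) ^ ((i : ℕ) + ((j : ℕ) + 1)) + (-1 : K) ^ ((j : ℕ) + (i : ℕ))) = 0 := by
    have h : (i : ℕ) + ((j : ℕ) + 1) = ((j : ℕ) + (i : ℕ)) + 1 := by omega
    rw [h, pow_succ]; ring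
  rw [hsign, zero_smul]

/-- `l_{n-1} ∘ l_n = 0` for all `n ≥ 1`. -/
theorem l_comp_l (qop : X → X → X) (hop : X → X → Y → Y → Y)
    (qidem : ∀ x, qop x x = x)
    (qbij : ∀ a, Function.Bijective fun x => qop x a)
    (qdistrib : ∀ x1 x2 x3, qop (qop x1 x2) x3 = qop (qop x1 x3) (qop x2 x3))
    (hidem : ∀ x y, hop x x y y = y)
    (hbij : ∀ x1 x2 (a : Y), Function.Bijective fun y => hop x1 x2 y a)
    (hdistrib : ∀ x1 x2 x3 (y1 y2 y3 : Y),
      hop (qop x1 x2) x3 (hop x1 x2 y1 y2) y3 =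
        hop (qop x1 x3) (qop x2 x3) (hop x1 x3 y1 y3) (hop x2 x3 y2 y3))
    (n : ℕ) :
    (lMap K qop hop n).comp (lMap K qop hop (n + 1)) = 0 := by
  classical
  have expand : (lMap K qop hop n).comp (lMap K qop hop (n + 1)) =
      ∑ p ∈ (Finset.univ : Finset (Fin (n + 1) × Fin (n + 2))),
        ((-1 : K) ^ ((p.1 : ℕ) + (p.2 : ℕ))) •
          (lamMap K qop hop n p.1).comp (lamMap K qop hop (n + 1) p.2) := by
    rw [← Finset.univ_product_univ, Finset.sum_product]
    rw [lMap, lMap, sum_comp']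
    simp only [LinearMap.smul_comp, LinearMap.comp_smul, smul_smul, pow_add]
    exact Finset.sum_congr rfl fun i _ => Finset.sum_congr rfl fun j _ => by rw [mul_comm]
  rw [expand]
  refine Finset.sum_involution
    (fun p _ => if h : (p.1 : ℕ) < (p.2 : ℕ)
      then (⟨(p.2 : ℕ) - 1, by omega⟩, ⟨(p.1 : ℕ), by omega⟩)
      else (⟨(p.2 : ℕ), by omega⟩, ⟨(p.1 : ℕ) + 1, by omega⟩))
    (fun p _ => ?_) (fun p _ _ => ?_) (fun p _ => Finset.mem_univ _) (fun p _ => ?_)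
  · -- terms cancel
    obtain ⟨i, j⟩ := p
    dsimp only
    by_cases h : (i : ℕ) < (j : ℕ)
    · rw [dif_pos h]
      have hne : j ≠ 0 := by
        intro hj0; rw [hj0] at h; simp at h
      obtain ⟨j₀, rfl⟩ := Fin.eq_succ_of_ne_zero hne
      have e1 : (⟨((j₀.succ : Fin (n + 2)) : ℕ) - 1, by omega⟩ : Fin (n + 1)) = j₀ := by
        ext; simp
      have e2 : (⟨(i : ℕ), by omega⟩ : Fin (n + 2)) = i.castSucc := rfl
      simp only [e1, e2]
      have hij : (i : ℕ) ≤ (j₀ : ℕ) := by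
        simp only [Fin.val_succ] at h; omega
      have := pair_cancel K qop hop qdistrib hdistrib i j₀ hij
      simpa using this
    · rw [dif_neg h]
      push_neg at h
      obtain ⟨j', rfl⟩ : ∃ j' : Fin (n + 1), j = j'.castSucc :=
        ⟨⟨(j : ℕ), by omega⟩, by ext; rfl⟩
      have e1 : (⟨((j'.castSucc : Fin (n + 2)) : ℕ), by omega⟩ : Fin (n + 1)) = j' := by
        ext; simp
      have e2 : (⟨(i : ℕ) + 1, by omega⟩ : Fin (n + 2)) = i.succ := rfl
      simp only [e1, e2]
      have hij : (j' : ℕ) ≤ (i : ℕ) := by simpa using h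
      have := pair_cancel K qop hop qdistrib hdistrib j' i hij
      simp only [Fin.coe_castSucc] at this ⊢
      exact (add_comm _ _).trans this
  · -- no fixed points
    obtain ⟨i, j⟩ := p
    dsimp only
    by_cases h : (i : ℕ) < (j : ℕ)
    · rw [dif_pos h]
      intro hc
      rw [Prod.ext_iff] at hc
      simp only [Fin.ext_iff] at hc
      omega
    · rw [dif_neg h]
      intro hc
      rw [Prod.ext_iff] at hc
      simp only [Fin.ext_iff] at hc
      omega
  · -- involution
    obtain ⟨i, j⟩ := p
    dsimp only
    by_cases h : (i : ℕ) < (j : ℕ)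
    · rw [dif_pos h, dif_neg (by simp; omega)]
      ext <;> simp <;> omega
    · rw [dif_neg h, dif_pos (by simp; omega)]
      push_neg at h
      ext <;> simp

end Stmt5
end

section
/- If i < j ≤ n, then λ_{n−1,j−1} ∘ λ_{n,i} = λ_{n−1,i} ∘ λ_{n,j} as maps V_n → V_{n−2}. -/
namespace Stmt11

variable {X Y : Type*}

/-- The free `K`-module `V_n` on tuples in `Y^n × X^n`. -/
abbrev V (K : Type*) [CommRing K] (X Y : Type*) (n : ℕ) : Type _ :=
  ((Fin n → Y) × (Fin n → X)) →₀ K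

/-- `λ_{n,i}` on generators: act on the entries before `i` by the `i`-th entry
and delete the `i`-th entry. -/
def lamTup (qop : X → X → X) (hop : X → X → Y → Y → Y) {n : ℕ} (i : Fin (n + 1))
    (t : (Fin (n + 1) → Y) × (Fin (n + 1) → X)) : (Fin n → Y) × (Fin n → X) :=
  (fun j => if (j : ℕ) < (i : ℕ)
      then hop (t.2 j.castSucc) (t.2 i) (t.1 j.castSucc) (t.1 i)
      else t.1 j.succ,
   fun j => if (j : ℕ) < (i : ℕ) then qop (t.2 j.castSucc) (t.2 i) else t.2 j.succ)

/-- `ρ_{n,i}` on generators: delete the `i`-th entries of both tuples. -/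
def rhoTup {n : ℕ} (i : Fin (n + 1))
    (t : (Fin (n + 1) → Y) × (Fin (n + 1) → X)) : (Fin n → Y) × (Fin n → X) :=
  (fun j => t.1 (i.succAbove j), fun j => t.2 (i.succAbove j))

/-- The linear map `λ_{n,i} : V_{n+1} → V_n`. -/
noncomputable def lamMap (K : Type*) [CommRing K] (qop : X → X → X)
    (hop : X → X → Y → Y → Y) (n : ℕ) (i : Fin (n + 1)) :
    V K X Y (n + 1) →ₗ[K] V K X Y n :=
  Finsupp.lmapDomain K K (lamTup qop hop i)

/-- The linear map `ρ_{n,i} : V_{n+1} → V_n`. -/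
noncomputable def rhoMap (K : Type*) [CommRing K] (n : ℕ) (i : Fin (n + 1)) :
    V K X Y (n + 1) →ₗ[K] V K X Y n :=
  Finsupp.lmapDomain K K (rhoTup i)

/-- `l_n = Σ_i (-1)^{i+1} λ_{n,i}` (written with `0`-based indices). -/
noncomputable def lMap (K : Type*) [CommRing K] (qop : X → X → X)
    (hop : X → X → Y → Y → Y) (n : ℕ) : V K X Y (n + 1) →ₗ[K] V K X Y n :=
  ∑ i : Fin (n + 1), ((-1 : K) ^ (i : ℕ)) • lamMap K qop hop n i

/-- `r_n = Σ_i (-1)^{i+1} ρ_{n,i}` (written with `0`-based indices). -/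
noncomputable def rMap (K : Type*) [CommRing K] (n : ℕ) :
    V K X Y (n + 1) →ₗ[K] V K X Y n :=
  ∑ i : Fin (n + 1), ((-1 : K) ^ (i : ℕ)) • rhoMap (X := X) (Y := Y) K n i

/-- if `i < j ≤ n` then `λ_{n−1,j−1} ∘ λ_{n,i} = λ_{n−1,i} ∘ λ_{n,j}`
as maps `V_n → V_{n−2}` (written with `0`-based indices, `n ↦ n + 2`). -/
theorem lam_comm (K : Type*) [CommRing K] (qop : X → X → X) (hop : X → X → Y → Y → Y)
    (qidem : ∀ x, qop x x = x)
    (qbij : ∀ a, Function.Bijective fun x => qop x a)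
    (qdistrib : ∀ x1 x2 x3, qop (qop x1 x2) x3 = qop (qop x1 x3) (qop x2 x3))
    (hidem : ∀ x y, hop x x y y = y)
    (hbij : ∀ x1 x2 (a : Y), Function.Bijective fun y => hop x1 x2 y a)
    (hdistrib : ∀ x1 x2 x3 (y1 y2 y3 : Y),
      hop (qop x1 x2) x3 (hop x1 x2 y1 y2) y3 =
        hop (qop x1 x3) (qop x2 x3) (hop x1 x3 y1 y3) (hop x2 x3 y2 y3))
    (n : ℕ) (i j : ℕ) (hij : i < j) (hj : j ≤ n + 1) :
    (lamMap K qop hop n ⟨j - 1, by omega⟩).comp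
        (lamMap K qop hop (n + 1) ⟨i, by omega⟩) =
      (lamMap K qop hop n ⟨i, by omega⟩).comp
        (lamMap K qop hop (n + 1) ⟨j, by omega⟩) := by
  have key : lamTup qop hop (⟨j - 1, by omega⟩ : Fin (n + 1)) ∘
        lamTup qop hop (⟨i, by omega⟩ : Fin (n + 2)) =
      lamTup qop hop (⟨i, by omega⟩ : Fin (n + 1)) ∘
        lamTup qop hop (⟨j, by omega⟩ : Fin (n + 2)) := by
    have hj1 : j - 1 + 1 = j := by omega
    funext t
    refine Prod.ext ?_ ?_ <;> funext k <;>
      simp only [Function.comp_apply, lamTup, Fin.coe_castSucc, Fin.val_succ,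
        Fin.succ_mk, Fin.castSucc_mk, Fin.succ_castSucc, hj1] <;>
      split_ifs <;>
      first
        | rfl
        | omega
        | (congr 1 <;> simp [Fin.ext_iff] <;> omega)
        | exact qdistrib _ _ _
        | exact hdistrib _ _ _ _ _ _
        | (rw [qdistrib]; congr 1 <;> simp [Fin.ext_iff] <;> omega)
        | (rw [hdistrib]; congr 1 <;> simp [Fin.ext_iff] <;> omega)
  simp only [lamMap, ← Finsupp.lmapDomain_comp, key]

end Stmt11
end
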